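/- In the barrier-KKT context, let (x^μ, λ̄, ν) be a μ-central point. Then for every feasible point x ∈ 𝒞 (i.e., φ_i(x) ≤ 0 for all i and C x = d), one has ⟪F(x^μ), x^μ − x⟫ ≤ m·μ. -/

import Mathlib

open scoped RealInnerProductSpace
open Matrix

/-- The feasible set `𝒞 = {x | φ_i(x) ≤ 0 for all i, and C x = d}`. -/
def FeasSet {n m p : ℕ} (φ : Fin m → EuclideanSpace ℝ (Fin n) → ℝ)
    (C : Matrix (Fin p) (Fin n) ℝ) (d : EuclideanSpace ℝ (Fin p)) :
    Set (EuclideanSpace ℝ (Fin n)) :=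
  {x | (∀ i, φ i x ≤ 0) ∧ Matrix.toEuclideanLin C x = d}

/-- A `μ`-central point `(x^μ, λ̄, ν)`: positive multipliers, stationarity, perturbed
complementarity `λ̄ᵢ φᵢ(x^μ) = −μ`, and primal feasibility `C x^μ = d`. -/
def IsMuCentral {n m p : ℕ} (F : EuclideanSpace ℝ (Fin n) → EuclideanSpace ℝ (Fin n))
    (φ : Fin m → EuclideanSpace ℝ (Fin n) → ℝ)
    (C : Matrix (Fin p) (Fin n) ℝ) (d : EuclideanSpace ℝ (Fin p)) (μ : ℝ)
    (xμ : EuclideanSpace ℝ (Fin n)) (lamb : Fin m → ℝ)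
    (ν : EuclideanSpace ℝ (Fin p)) : Prop :=
  (∀ i, 0 < lamb i) ∧
  F xμ + (∑ i, lamb i • gradient (φ i) xμ) + Matrix.toEuclideanLin Cᵀ ν = 0 ∧
  (∀ i, lamb i * φ i xμ = -μ) ∧
  Matrix.toEuclideanLin C xμ = d

/-- Subgradient inequality for a convex differentiable function. -/
lemma grad_ineq {n : ℕ} {f : EuclideanSpace ℝ (Fin n) → ℝ}
    (hconv : ConvexOn ℝ Set.univ f) (hdiff : Differentiable ℝ f)
    (x y : EuclideanSpace ℝ (Fin n)) :
    ⟪gradient f x, y - x⟫ ≤ f y - f x := by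
  set g : ℝ → ℝ := fun t => f ((AffineMap.lineMap x y) t) with hg
  have hgc : ConvexOn ℝ Set.univ g := by
    have := hconv.comp_affineMap (AffineMap.lineMap x y)
    simpa [Set.preimage_univ, g, Function.comp_def] using this
  have hc : HasDerivAt (fun t : ℝ => (AffineMap.lineMap x y) t) (y - x) 0 := by
    simp only [AffineMap.lineMap_apply, vadd_eq_add]
    have h1 : HasDerivAt (fun t : ℝ => t • (y - x)) ((1:ℝ) • (y - x)) 0 :=
      (hasDerivAt_id (0:ℝ)).smul_const (y - x)
    simpa using h1.add_const x
  have hfd : HasFDerivAt f (InnerProductSpace.toDual ℝ _ (gradient f x)) x :=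
    (hdiff x).hasGradientAt
  have hfd' : HasFDerivAt f (InnerProductSpace.toDual ℝ _ (gradient f x))
      ((AffineMap.lineMap x y) (0:ℝ)) := by simpa using hfd
  have hgd : HasDerivAt g (⟪gradient f x, y - x⟫) 0 := by
    have := hfd'.comp_hasDerivAt (0:ℝ) hc
    simpa [g, Function.comp_def, InnerProductSpace.toDual_apply_apply] using this
  have hle : ⟪gradient f x, y - x⟫ ≤ slope g 0 1 :=
    hgc.le_slope_of_hasDerivAt (Set.mem_univ 0) (Set.mem_univ 1) one_pos hgd
  have hslope : slope g 0 1 = f y - f x := by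
    simp [slope, g]
  linarith [hle, hslope ▸ hle]

/-- Eq. (eq_app:1) in the paper: for a `μ`-central point `x^μ` and any
feasible `x`, `⟪F(x^μ), x^μ − x⟫ ≤ m μ`. -/
theorem stmt_16 {n m p : ℕ}
    (φ : Fin m → EuclideanSpace ℝ (Fin n) → ℝ)
    (hφconv : ∀ i, ConvexOn ℝ Set.univ (φ i))
    (hφdiff : ∀ i, Differentiable ℝ (φ i))
    (C : Matrix (Fin p) (Fin n) ℝ) (d : EuclideanSpace ℝ (Fin p))
    (μ : ℝ) (hμ : 0 < μ)
    (F : EuclideanSpace ℝ (Fin n) → EuclideanSpace ℝ (Fin n))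
    (xμ : EuclideanSpace ℝ (Fin n)) (lamb : Fin m → ℝ) (ν : EuclideanSpace ℝ (Fin p))
    (hcentral : IsMuCentral F φ C d μ xμ lamb ν) :
    ∀ x ∈ FeasSet φ C d, ⟪F xμ, xμ - x⟫ ≤ (m : ℝ) * μ := by
  obtain ⟨hlam, hstat, hcomp, hprim⟩ := hcentral
  intro x hx
  obtain ⟨hxφ, hxC⟩ := hx
  have hF : F xμ = -((∑ i, lamb i • gradient (φ i) xμ) + Matrix.toEuclideanLin Cᵀ ν) := by
    rw [add_assoc] at hstat
    exact eq_neg_of_add_eq_zero_left hstat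
  have hCz : ⟪Matrix.toEuclideanLin Cᵀ ν, xμ - x⟫ = 0 := by
    have hT : (Cᵀ : Matrix (Fin n) (Fin p) ℝ) = Cᴴ := by
      ext i j; simp [Matrix.conjTranspose_apply]
    rw [hT, Matrix.toEuclideanLin_conjTranspose_eq_adjoint, LinearMap.adjoint_inner_left,
      map_sub, hprim, hxC, sub_self, inner_zero_right]
  have hmain : ⟪F xμ, xμ - x⟫ = ∑ i, -(lamb i * ⟪gradient (φ i) xμ, xμ - x⟫) := by
    rw [hF, inner_neg_left, inner_add_left, hCz, add_zero, sum_inner, ← Finset.sum_neg_distrib]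
    congr 1
    ext i
    rw [real_inner_smul_left]
  rw [hmain]
  have hbound : ∀ i : Fin m, -(lamb i * ⟪gradient (φ i) xμ, xμ - x⟫) ≤ μ := by
    intro i
    have hgi : ⟪gradient (φ i) xμ, x - xμ⟫ ≤ φ i x - φ i xμ :=
      grad_ineq (hφconv i) (hφdiff i) xμ x
    have hsub : ⟪gradient (φ i) xμ, xμ - x⟫ = -⟪gradient (φ i) xμ, x - xμ⟫ := by
      rw [← inner_neg_right]; congr 1; abel
    have hl := (hlam i).le
    have hφx := hxφ i
    have hc := hcomp i
    nlinarith [mul_le_mul_of_nonneg_left hgi hl]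
  calc ∑ i : Fin m, -(lamb i * ⟪gradient (φ i) xμ, xμ - x⟫)
      ≤ ∑ _i : Fin m, μ := Finset.sum_le_sum fun i _ => hbound i
    _ = (m : ℝ) * μ := by simp [Finset.sum_const, Finset.card_univ, nsmul_eq_mul]
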